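/- Let k be a field, V a k-vector space, and R a k-linear endomorphism of V⊗V. Then R is a solution of the Hopf equation (R¹²R²³ = R²³R¹³R¹² in End(V⊗V⊗V)) if and only if W := τ∘R∘τ is a solution of the pentagonal equation (W¹²W¹³W²³ = W²³W¹² in End(V⊗V⊗V)), where τ : V⊗V → V⊗V is the flip map τ(v⊗w) = w⊗v. -/
import Mathlib


open TensorProduct LinearMap

section HopfEq

variable (k V : Type*) [Field k] [AddCommGroup V] [Module k V]

/-- The flip map `τ : V ⊗ V → V ⊗ V`, `τ(v ⊗ w) = w ⊗ v`. -/
noncomputable def flipMap : V ⊗[k] V →ₗ[k] V ⊗[k] V :=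
  (TensorProduct.comm k V V).toLinearMap

variable {k V}

/-- `R¹² = R ⊗ I` as an endomorphism of `V ⊗ V ⊗ V`. -/
noncomputable def map12 (R : V ⊗[k] V →ₗ[k] V ⊗[k] V) :
    V ⊗[k] (V ⊗[k] V) →ₗ[k] V ⊗[k] (V ⊗[k] V) :=
  (TensorProduct.assoc k V V V).toLinearMap ∘ₗ R.rTensor V ∘ₗ
    (TensorProduct.assoc k V V V).symm.toLinearMap

/-- `R²³ = I ⊗ R` as an endomorphism of `V ⊗ V ⊗ V`. -/
noncomputable def map23 (R : V ⊗[k] V →ₗ[k] V ⊗[k] V) :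
    V ⊗[k] (V ⊗[k] V) →ₗ[k] V ⊗[k] (V ⊗[k] V) :=
  R.lTensor V

/-- `R¹³ = (I ⊗ τ)(R ⊗ I)(I ⊗ τ)` as an endomorphism of `V ⊗ V ⊗ V`. -/
noncomputable def map13 (R : V ⊗[k] V →ₗ[k] V ⊗[k] V) :
    V ⊗[k] (V ⊗[k] V) →ₗ[k] V ⊗[k] (V ⊗[k] V) :=
  (flipMap k V).lTensor V ∘ₗ map12 R ∘ₗ (flipMap k V).lTensor V

/-- `R` is a solution of the Hopf equation: `R¹²R²³ = R²³R¹³R¹²`. -/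
def IsHopfSolution (R : V ⊗[k] V →ₗ[k] V ⊗[k] V) : Prop :=
  map12 R ∘ₗ map23 R = map23 R ∘ₗ map13 R ∘ₗ map12 R

/-- `R` is a solution of the pentagonal equation: `R¹²R¹³R²³ = R²³R¹²`. -/
def IsPentagonSolution (R : V ⊗[k] V →ₗ[k] V ⊗[k] V) : Prop :=
  map12 R ∘ₗ map13 R ∘ₗ map23 R = map23 R ∘ₗ map12 R

end HopfEq


section Aux

variable {k V : Type*} [Field k] [AddCommGroup V] [Module k V]

/-- The reversal permutation `x ⊗ y ⊗ z ↦ z ⊗ y ⊗ x`. -/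
noncomputable def revP : V ⊗[k] (V ⊗[k] V) →ₗ[k] V ⊗[k] (V ⊗[k] V) :=
  map13 (flipMap k V)

@[simp] lemma revP_tmul (x y z : V) :
    revP (x ⊗ₜ[k] (y ⊗ₜ[k] z)) = z ⊗ₜ[k] (y ⊗ₜ[k] x) := by
  simp [revP, map13, map12, flipMap]

@[simp] lemma revP_revP : (revP : V ⊗[k] (V ⊗[k] V) →ₗ[k] _) ∘ₗ revP = LinearMap.id := by
  ext x y z
  simp

lemma revP_map12 (R : V ⊗[k] V →ₗ[k] V ⊗[k] V) :
    revP ∘ₗ map12 R = map23 (flipMap k V ∘ₗ R ∘ₗ flipMap k V) ∘ₗ revP := by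
  ext x y z
  simp only [AlgebraTensorModule.curry_apply, curry_apply, LinearMap.coe_restrictScalars,
    LinearMap.coe_comp, Function.comp_apply, map12, map23, revP_tmul, lTensor_tmul,
    LinearEquiv.coe_coe, TensorProduct.assoc_symm_tmul, rTensor_tmul, flipMap,
    TensorProduct.comm_tmul]
  induction R (x ⊗ₜ[k] y) using TensorProduct.induction_on with
  | zero => simp
  | tmul a b => simp [flipMap]
  | add s t hs ht => simp only [map_add, add_tmul, tmul_add, hs, ht]

lemma revP_map23 (R : V ⊗[k] V →ₗ[k] V ⊗[k] V) :
    revP ∘ₗ map23 R = map12 (flipMap k V ∘ₗ R ∘ₗ flipMap k V) ∘ₗ revP := by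
  ext x y z
  simp only [AlgebraTensorModule.curry_apply, curry_apply, LinearMap.coe_restrictScalars,
    LinearMap.coe_comp, Function.comp_apply, map12, map23, revP_tmul, lTensor_tmul,
    LinearEquiv.coe_coe, TensorProduct.assoc_symm_tmul, rTensor_tmul, flipMap,
    TensorProduct.comm_tmul]
  induction R (y ⊗ₜ[k] z) using TensorProduct.induction_on with
  | zero => simp
  | tmul a b => simp [flipMap]
  | add s t hs ht => simp only [map_add, add_tmul, tmul_add, hs, ht]

lemma revP_map13 (R : V ⊗[k] V →ₗ[k] V ⊗[k] V) :
    revP ∘ₗ map13 R = map13 (flipMap k V ∘ₗ R ∘ₗ flipMap k V) ∘ₗ revP := by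
  ext x y z
  simp only [AlgebraTensorModule.curry_apply, curry_apply, LinearMap.coe_restrictScalars,
    LinearMap.coe_comp, Function.comp_apply, map12, map13, map23, revP_tmul, lTensor_tmul,
    LinearEquiv.coe_coe, TensorProduct.assoc_symm_tmul, rTensor_tmul, flipMap,
    TensorProduct.comm_tmul]
  induction R (x ⊗ₜ[k] z) using TensorProduct.induction_on with
  | zero => simp
  | tmul a b => simp [flipMap]
  | add s t hs ht => simp only [map_add, add_tmul, tmul_add, hs, ht]

end Aux

/-- `R` satisfies the Hopf equation iff `W := τ∘R∘τ` satisfies the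
pentagonal equation. -/
theorem hopf_iff_flip_pentagon (k V : Type*) [Field k] [AddCommGroup V] [Module k V]
    (R : V ⊗[k] V →ₗ[k] V ⊗[k] V) :
    IsHopfSolution R ↔ IsPentagonSolution (flipMap k V ∘ₗ R ∘ₗ flipMap k V) := by
  set W := flipMap k V ∘ₗ R ∘ₗ flipMap k V with hW
  have hPP : ∀ v : V ⊗[k] (V ⊗[k] V), revP (revP v) = v := fun v =>
    LinearMap.congr_fun (revP_revP (k := k) (V := V)) v
  have hinj : Function.Injective (revP : V ⊗[k] (V ⊗[k] V) →ₗ[k] _) :=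
    Function.LeftInverse.injective hPP
  have hff : ∀ t : V ⊗[k] V, flipMap k V (flipMap k V t) = t := fun t =>
    LinearMap.congr_fun
      (show flipMap k V ∘ₗ flipMap k V = (LinearMap.id : V ⊗[k] V →ₗ[k] V ⊗[k] V) by
        ext x y; simp [flipMap]) t
  have hWW : flipMap k V ∘ₗ W ∘ₗ flipMap k V = R := by
    refine LinearMap.ext fun t => ?_
    simp only [hW, LinearMap.coe_comp, Function.comp_apply, hff]
  have e12 : ∀ u, revP (map12 W u) = map23 R (revP u) := fun u => by
    have := LinearMap.congr_fun ((revP_map12 W).trans (by rw [hWW])) u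
    simpa using this
  have e23 : ∀ u, revP (map23 W u) = map12 R (revP u) := fun u => by
    have := LinearMap.congr_fun ((revP_map23 W).trans (by rw [hWW])) u
    simpa using this
  have e13 : ∀ u, revP (map13 W u) = map13 R (revP u) := fun u => by
    have := LinearMap.congr_fun ((revP_map13 W).trans (by rw [hWW])) u
    simpa using this
  have f12 : ∀ u, revP (map12 R u) = map23 W (revP u) := fun u => by
    have := LinearMap.congr_fun (revP_map12 R) u
    simpa [← hW] using this
  have f23 : ∀ u, revP (map23 R u) = map12 W (revP u) := fun u => by
    have := LinearMap.congr_fun (revP_map23 R) u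
    simpa [← hW] using this
  have f13 : ∀ u, revP (map13 R u) = map13 W (revP u) := fun u => by
    have := LinearMap.congr_fun (revP_map13 R) u
    simpa [← hW] using this
  constructor
  · intro h
    have h' : ∀ v, map12 R (map23 R v) = map23 R (map13 R (map12 R v)) := fun v => by
      simpa using LinearMap.congr_fun h v
    refine LinearMap.ext fun v => hinj ?_
    simp only [LinearMap.coe_comp, Function.comp_apply, e12, e13, e23]
    exact (h' _).symm
  · intro h
    have h'' : ∀ v, map12 W (map13 W (map23 W v)) = map23 W (map12 W v) := fun v => by
      simpa using LinearMap.congr_fun h v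
    refine LinearMap.ext fun v => hinj ?_
    simp only [LinearMap.coe_comp, Function.comp_apply, f12, f13, f23]
    exact (h'' _).symm
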